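/- A positive harmonic function v on an open sector A = {re^{iθ} : r > 0, |θ| < α} of opening 2α ≤ 2π grows at most polynomially in any proper subsector: for β < α there exist C, p > 0 such that v(re^{iθ}) ≤ C·r^p for all r ≥ 1 and |θ| ≤ β. -/

import Mathlib

open Real Complex MeasureTheory Metric Set Filter

/-- The Laplacian of `v : ℂ → ℝ` as the sum of the two second partial derivatives. -/
noncomputable def lap (v : ℂ → ℝ) (z : ℂ) : ℝ :=
  deriv (deriv (fun x : ℝ => v (x + z.im * Complex.I))) z.re +
    deriv (deriv (fun y : ℝ => v (z.re + y * Complex.I))) z.im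

/-- `v` is harmonic on an open set `U`. -/
def HarmonicOn (v : ℂ → ℝ) (U : Set ℂ) : Prop :=
  ContDiffOn ℝ 2 v U ∧ ∀ z ∈ U, lap v z = 0

namespace PHPG

variable {v : ℂ → ℝ} {U : Set ℂ} {z : ℂ}

lemma hasFDerivAt_of_contDiffOn (hU : IsOpen U) (hv : ContDiffOn ℝ 2 v U) (hz : z ∈ U) :
    HasFDerivAt v (fderiv ℝ v z) z := by
  have h := (hv.contDiffAt (hU.mem_nhds hz)).differentiableAt (by norm_num)
  exact h.hasFDerivAt

lemma hasFDerivAt_fderiv (hU : IsOpen U) (hv : ContDiffOn ℝ 2 v U) (hz : z ∈ U) :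
    HasFDerivAt (fderiv ℝ v) (fderiv ℝ (fderiv ℝ v) z) z := by
  have h1 : ContDiffOn ℝ 1 (fderiv ℝ v) U := hv.fderiv_of_isOpen hU (by norm_num)
  exact ((h1.contDiffAt (hU.mem_nhds hz)).differentiableAt (by norm_num)).hasFDerivAt

/-- second derivative in directions w₁ w₂ -/
lemma deriv_deriv_line (hU : IsOpen U) (hv : ContDiffOn ℝ 2 v U) (hz : z ∈ U)
    (L : ℝ → ℂ) (w : ℂ) (t₀ : ℝ) (hL : ∀ t, HasDerivAt L w t) (hLz : L t₀ = z) :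
    deriv (deriv (fun t : ℝ => v (L t))) t₀ = fderiv ℝ (fderiv ℝ v) z w w := by
  have hcont : Continuous L := by
    have : Differentiable ℝ L := fun t => (hL t).differentiableAt
    exact this.continuous
  have hev : ∀ᶠ t in nhds t₀, L t ∈ U := by
    have : L ⁻¹' U ∈ nhds t₀ := hcont.continuousAt.preimage_mem_nhds
      (hU.mem_nhds (by rw [hLz]; exact hz))
    exact this
  have h1 : deriv (fun t : ℝ => v (L t)) =ᶠ[nhds t₀] fun t => fderiv ℝ v (L t) w := by
    filter_upwards [hev] with t ht
    have : HasDerivAt (fun t : ℝ => v (L t)) (fderiv ℝ v (L t) w) t := by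
      have := (hasFDerivAt_of_contDiffOn hU hv ht).comp_hasDerivAt t (hL t)
      exact this
    exact this.deriv
  rw [h1.deriv_eq]
  have h2 : HasDerivAt (fun t => fderiv ℝ v (L t) w)
      (fderiv ℝ (fderiv ℝ v) z w w) t₀ := by
    have hD : HasDerivAt (fun t => fderiv ℝ v (L t)) (fderiv ℝ (fderiv ℝ v) z w) t₀ := by
      have hz' : HasFDerivAt (fderiv ℝ v) (fderiv ℝ (fderiv ℝ v) z) (L t₀) := by
        rw [hLz]; exact hasFDerivAt_fderiv hU hv hz
      exact hz'.comp_hasDerivAt t₀ (hL t₀)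
    have := hD.clm_apply (hasDerivAt_const t₀ w)
    simpa using this
  exact h2.deriv

lemma lap_eq (hU : IsOpen U) (hv : ContDiffOn ℝ 2 v U) (hz : z ∈ U) :
    lap v z = fderiv ℝ (fderiv ℝ v) z 1 1 +
      fderiv ℝ (fderiv ℝ v) z Complex.I Complex.I := by
  unfold lap
  congr 1
  · refine deriv_deriv_line hU hv hz (fun x : ℝ => (x : ℂ) + z.im * Complex.I) 1 z.re
      (fun t => ?_) (Complex.re_add_im z)
    simpa using (Complex.ofRealCLM.hasDerivAt (x := t)).add_const ((z.im : ℂ) * Complex.I)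
  · refine deriv_deriv_line hU hv hz (fun y : ℝ => (z.re : ℂ) + y * Complex.I) Complex.I z.im
      (fun t => ?_) (Complex.re_add_im z)
    have : HasDerivAt (fun y : ℝ => (y : ℂ)) 1 t := Complex.ofRealCLM.hasDerivAt (x := t)
    simpa using (this.mul_const Complex.I).const_add (z.re : ℂ)

lemma snd_symm (hU : IsOpen U) (hv : ContDiffOn ℝ 2 v U) (hz : z ∈ U) (w₁ w₂ : ℂ) :
    fderiv ℝ (fderiv ℝ v) z w₁ w₂ = fderiv ℝ (fderiv ℝ v) z w₂ w₁ := by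
  have hev : ∀ᶠ y in nhds z, HasFDerivAt v (fderiv ℝ v y) y := by
    filter_upwards [hU.mem_nhds hz] with y hy
    exact hasFDerivAt_of_contDiffOn hU hv hy
  exact second_derivative_symmetric_of_eventually (f := v) hev (hasFDerivAt_fderiv hU hv hz) w₁ w₂


/-- The "complex gradient" `∂v/∂x - i ∂v/∂y`. -/
noncomputable def cg (v : ℂ → ℝ) (z : ℂ) : ℂ :=
  (fderiv ℝ v z 1 : ℝ) - (fderiv ℝ v z Complex.I : ℝ) * Complex.I

lemma clm_eq_mul {L : ℂ →L[ℝ] ℂ} {a : ℂ} (h1 : L 1 = a) (hI : L Complex.I = Complex.I * a)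
    (w : ℂ) : L w = w * a := by
  have hw : w = w.re • (1 : ℂ) + w.im • Complex.I := by
    simp [Complex.real_smul, Complex.re_add_im]
  nth_rewrite 1 [hw]
  rw [map_add, L.map_smul, L.map_smul, h1, hI]
  conv_rhs => rw [← Complex.re_add_im w]
  simp only [Complex.real_smul]
  ring

lemma re_cg_mul (z w : ℂ) : (cg v z * w).re = fderiv ℝ v z w := by
  have hw : w = w.re • (1 : ℂ) + w.im • Complex.I := by
    simp [Complex.real_smul, Complex.re_add_im]
  nth_rewrite 2 [hw]
  rw [map_add, (fderiv ℝ v z).map_smul, (fderiv ℝ v z).map_smul]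
  simp [cg, Complex.mul_re, Complex.sub_re, Complex.sub_im, Complex.mul_im, smul_eq_mul]
  ring

lemma cg_differentiableAt (hU : IsOpen U) (hv : HarmonicOn v U) (hz : z ∈ U) :
    DifferentiableAt ℂ (cg v) z := by
  obtain ⟨hv2, hlap⟩ := hv
  set D2 := fderiv ℝ (fderiv ℝ v) z with hD2def
  set a : ℂ := (D2 1 1 : ℝ) - (D2 1 Complex.I : ℝ) * Complex.I with ha
  have hD2 : HasFDerivAt (fderiv ℝ v) D2 z := hasFDerivAt_fderiv hU hv2 hz
  have h1 : HasFDerivAt (fun y => ((fderiv ℝ v y 1 : ℝ) : ℂ))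
      (Complex.ofRealCLM.comp ((ContinuousLinearMap.apply ℝ ℝ (1 : ℂ)).comp D2)) z :=
    Complex.ofRealCLM.hasFDerivAt.comp z
      (((ContinuousLinearMap.apply ℝ ℝ (1 : ℂ)).hasFDerivAt).comp z hD2)
  have h2 : HasFDerivAt (fun y => ((fderiv ℝ v y Complex.I : ℝ) : ℂ))
      (Complex.ofRealCLM.comp ((ContinuousLinearMap.apply ℝ ℝ Complex.I).comp D2)) z :=
    Complex.ofRealCLM.hasFDerivAt.comp z
      (((ContinuousLinearMap.apply ℝ ℝ Complex.I).hasFDerivAt).comp z hD2)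
  have h3 := (h1.sub (h2.mul_const Complex.I))
  have hsymm : D2 Complex.I 1 = D2 1 Complex.I := snd_symm hU hv2 hz Complex.I 1
  have hlap' : D2 Complex.I Complex.I = -(D2 1 1) := by
    have := hlap z hz
    rw [lap_eq hU hv2 hz] at this
    linarith
  have heq : (Complex.ofRealCLM.comp ((ContinuousLinearMap.apply ℝ ℝ (1 : ℂ)).comp D2)
      - Complex.I • Complex.ofRealCLM.comp
          ((ContinuousLinearMap.apply ℝ ℝ Complex.I).comp D2))
      = (ContinuousLinearMap.restrictScalars ℝ
          ((1 : ℂ →L[ℂ] ℂ).smulRight a)) := by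
    set L := Complex.ofRealCLM.comp ((ContinuousLinearMap.apply ℝ ℝ (1 : ℂ)).comp D2)
      - Complex.I • Complex.ofRealCLM.comp
          ((ContinuousLinearMap.apply ℝ ℝ Complex.I).comp D2) with hLdef
    have hL1 : ∀ u : ℂ, L u = ((D2 u 1 : ℝ) : ℂ) - ((D2 u Complex.I : ℝ) : ℂ) * Complex.I := by
      intro u
      simp [hLdef, ContinuousLinearMap.smul_apply, smul_eq_mul]
      ring
    ext w
    have hR : (ContinuousLinearMap.restrictScalars ℝ ((1 : ℂ →L[ℂ] ℂ).smulRight a)) w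
        = w * a := by
      simp [ContinuousLinearMap.smulRight_apply, smul_eq_mul]
    rw [hR]
    refine clm_eq_mul (L := L) ?_ ?_ w
    · rw [hL1 1, ha]
    · rw [hL1 Complex.I, hsymm, hlap', ha]
      push_cast
      linear_combination ((D2 1 Complex.I : ℝ) : ℂ) * Complex.I_sq
  rw [heq] at h3
  have : HasFDerivAt (cg v) (ContinuousLinearMap.restrictScalars ℝ
      ((1 : ℂ →L[ℂ] ℂ).smulRight a)) z := h3
  exact (hasFDerivAt_of_restrictScalars ℝ this rfl).differentiableAt

lemma cg_continuousOn (hU : IsOpen U) (hv : ContDiffOn ℝ 2 v U) :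
    ContinuousOn (cg v) U := by
  have h1 : ContinuousOn (fderiv ℝ v) U :=
    (hv.fderiv_of_isOpen hU (by norm_num : (1:WithTop ℕ∞) + 1 ≤ 2)).continuousOn
  have e1 : ContinuousOn (fun z => ((fderiv ℝ v z 1 : ℝ) : ℂ)) U :=
    Complex.continuous_ofReal.comp_continuousOn
      (((ContinuousLinearMap.apply ℝ ℝ (1 : ℂ)).continuous).comp_continuousOn h1)
  have e2 : ContinuousOn (fun z => ((fderiv ℝ v z Complex.I : ℝ) : ℂ)) U :=
    Complex.continuous_ofReal.comp_continuousOn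
      (((ContinuousLinearMap.apply ℝ ℝ Complex.I).continuous).comp_continuousOn h1)
  exact e1.sub (e2.mul continuousOn_const)


lemma abs_exp_I (t : ℝ) : ‖Complex.exp (t * Complex.I)‖ = 1 :=
  Complex.norm_exp_ofReal_mul_I t

lemma mem_cball (c : ℂ) {s ρ : ℝ} (hs : |s| ≤ ρ) (t : ℝ) :
    c + s * Complex.exp (t * Complex.I) ∈ closedBall c ρ := by
  simp only [mem_closedBall, Complex.dist_eq, add_sub_cancel_left]
  rw [norm_mul, abs_exp_I, mul_one, Complex.norm_real, Real.norm_eq_abs]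
  exact hs

lemma cont_exp_I : Continuous fun t : ℝ => Complex.exp (t * Complex.I) :=
  Complex.continuous_exp.comp (Complex.continuous_ofReal.mul continuous_const)

lemma cont_cmap (c : ℂ) (x : ℝ) :
    Continuous fun t : ℝ => c + (x:ℂ) * Complex.exp (t * Complex.I) :=
  continuous_const.add (continuous_const.mul cont_exp_I)

lemma circle_mvp (hU : IsOpen U) (hv : HarmonicOn v U) {c : ℂ} {R : ℝ} (hR : 0 < R)
    (hsub : closedBall c R ⊆ U) :
    ∫ t in (0:ℝ)..(2*π), v (c + R * Complex.exp (t * Complex.I)) = 2 * π * v c := by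
  obtain ⟨δ, hδ, hthick⟩ :=
    (isCompact_closedBall c R).exists_cthickening_subset_open hU hsub
  set R₁ := δ + R with hR₁def
  have hsub1 : closedBall c R₁ ⊆ U := by
    rw [← cthickening_closedBall hδ.le hR.le c]; exact hthick
  have hRR₁ : R < R₁ := by simp [hR₁def]; linarith
  have hR₁0 : 0 < R₁ := lt_trans hR hRR₁
  have hcontv : ContinuousOn v U := hv.1.continuousOn
  have hcontv1 : ContinuousOn v (closedBall c R₁) := hcontv.mono hsub1
  have hcontcg : ContinuousOn (cg v) (closedBall c R₁) :=
    (cg_continuousOn hU hv.1).mono hsub1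
  obtain ⟨Mc, hMc⟩ := (isCompact_closedBall c R₁).exists_bound_of_continuousOn hcontcg
  obtain ⟨Mv, hMv⟩ := (isCompact_closedBall c R₁).exists_bound_of_continuousOn hcontv1
  set h : ℝ → ℝ := fun s => ∫ t in (0:ℝ)..(2*π), v (c + s * Complex.exp (t * Complex.I))
    with hdef
  -- continuity of the slice in t for fixed |s| ≤ R₁
  have hFcont : ∀ s : ℝ, |s| ≤ R₁ →
      Continuous (fun t : ℝ => v (c + s * Complex.exp (t * Complex.I))) := by
    intro s hs
    refine hcontv1.comp_continuous (cont_cmap c s) (fun t => mem_cball c hs t)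
  have hF'cont : ∀ s : ℝ, |s| ≤ R₁ →
      Continuous (fun t : ℝ =>
        (cg v (c + s * Complex.exp (t * Complex.I)) * Complex.exp (t * Complex.I)).re) := by
    intro s hs
    refine Complex.continuous_re.comp ?_
    exact (hcontcg.comp_continuous (cont_cmap c s) (fun t => mem_cball c hs t)).mul
      cont_exp_I
  -- derivative of h vanishes on (0, R₁)
  have hderiv : ∀ s₀ ∈ Ioo (0:ℝ) R₁, HasDerivAt h 0 s₀ := by
    rintro s₀ ⟨hs₀0, hs₀1⟩
    set F' : ℝ → ℝ → ℝ := fun s t =>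
      (cg v (c + s * Complex.exp (t * Complex.I)) * Complex.exp (t * Complex.I)).re with hF'def
    set ε := min s₀ (R₁ - s₀) with hεdef
    have hε : 0 < ε := lt_min hs₀0 (by linarith)
    have hball : ∀ x ∈ ball s₀ ε, 0 < x ∧ x < R₁ := by
      intro x hx
      rw [mem_ball, Real.dist_eq] at hx
      have h1 := abs_lt.1 hx
      constructor
      · have := min_le_left s₀ (R₁ - s₀); linarith [h1.1]
      · have := min_le_right s₀ (R₁ - s₀); linarith [h1.2]
    have key := intervalIntegral.hasDerivAt_integral_of_dominated_loc_of_deriv_le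
      (𝕜 := ℝ) (E := ℝ)
      (F := fun s t => v (c + s * Complex.exp (t * Complex.I))) (F' := F')
      (x₀ := s₀) (a := 0) (b := 2*π) (bound := fun _ => Mc) (μ := volume) (s := ball s₀ ε) (ball_mem_nhds s₀ hε)
      ?_ ?_ ?_ ?_ ?_ ?_
    · have h0 : (∫ t in (0:ℝ)..(2*π), F' s₀ t) = 0 := by
        have hz : (∮ z in C(c, s₀), cg v z) = 0 := by
          refine circleIntegral_eq_zero_of_differentiable_on_off_countable hs₀0.le
            countable_empty ?_ ?_
          · exact hcontcg.mono (closedBall_subset_closedBall (by linarith))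
          · intro z hz
            refine cg_differentiableAt hU hv (hsub1 ?_)
            exact closedBall_subset_closedBall (by linarith) (ball_subset_closedBall hz.1)
        rw [circleIntegral] at hz
        have heq : ∀ t : ℝ, deriv (circleMap c s₀) t • cg v (circleMap c s₀ t)
            = ((s₀:ℂ) * Complex.I) *
              (Complex.exp (t * Complex.I) * cg v (c + s₀ * Complex.exp (t * Complex.I))) := by
          intro t
          rw [deriv_circleMap]
          simp only [circleMap, smul_eq_mul, zero_add]
          ring
        rw [intervalIntegral.integral_congr (fun t _ => heq t)] at hz
        rw [intervalIntegral.integral_const_mul] at hz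
        have hs₀I : ((s₀:ℂ) * Complex.I) ≠ 0 := by
          simp [Complex.ext_iff]; intro h'; exact absurd h' (ne_of_gt hs₀0)
        have hint0 : (∫ t in (0:ℝ)..(2*π),
            Complex.exp (t * Complex.I) * cg v (c + s₀ * Complex.exp (t * Complex.I))) = 0 :=
          (mul_eq_zero.1 hz).resolve_left hs₀I
        have hii : IntervalIntegrable (fun t : ℝ =>
            Complex.exp (t * Complex.I) * cg v (c + s₀ * Complex.exp (t * Complex.I)))
            volume 0 (2*π) := by
          refine Continuous.intervalIntegrable ?_ _ _
          exact cont_exp_I.mul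
            (hcontcg.comp_continuous (cont_cmap c s₀)
              (fun t => mem_cball c (by rw [abs_of_pos hs₀0]; linarith) t))
        calc (∫ t in (0:ℝ)..(2*π), F' s₀ t)
            = ∫ t in (0:ℝ)..(2*π), Complex.reCLM
                (Complex.exp (t * Complex.I) * cg v (c + s₀ * Complex.exp (t * Complex.I))) := by
              refine intervalIntegral.integral_congr (fun t _ => ?_)
              simp only [hF'def, Complex.reCLM_apply]
              rw [mul_comm]
          _ = Complex.reCLM (∫ t in (0:ℝ)..(2*π),
                Complex.exp (t * Complex.I) * cg v (c + s₀ * Complex.exp (t * Complex.I))) :=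
              Complex.reCLM.intervalIntegral_comp_comm hii
          _ = 0 := by rw [hint0]; simp
      rw [h0] at key
      exact key.2
    · filter_upwards [ball_mem_nhds s₀ hε] with x hx
      obtain ⟨hx0, hx1⟩ := hball x hx
      exact ((hFcont x (by rw [abs_of_pos hx0]; linarith)).aestronglyMeasurable).restrict
    · exact ((hFcont s₀ (by rw [abs_of_pos hs₀0]; linarith)).intervalIntegrable _ _)
    · exact ((hF'cont s₀ (by rw [abs_of_pos hs₀0]; linarith)).aestronglyMeasurable).restrict
    · filter_upwards with t
      intro _ x hx
      obtain ⟨hx0, hx1⟩ := hball x hx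
      have hmem := mem_cball c (ρ := R₁) (s := x) (by rw [abs_of_pos hx0]; linarith) t
      calc ‖F' x t‖ ≤ ‖(cg v (c + x * Complex.exp (t * Complex.I))
            * Complex.exp (t * Complex.I))‖ := by
              rw [Real.norm_eq_abs]; exact Complex.abs_re_le_norm _
        _ = ‖cg v (c + x * Complex.exp (t * Complex.I))‖ := by
              rw [norm_mul, abs_exp_I, mul_one]
        _ ≤ Mc := by simpa using hMc _ hmem
    · exact intervalIntegrable_const
    · filter_upwards with t
      intro _ x hx
      obtain ⟨hx0, hx1⟩ := hball x hx
      have hz : c + x * Complex.exp (t * Complex.I) ∈ U :=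
        hsub1 (mem_cball c (by rw [abs_of_pos hx0]; linarith) t)
      have hL : HasDerivAt (fun s : ℝ => c + (s:ℂ) * Complex.exp (t * Complex.I))
          (Complex.exp (t * Complex.I)) x := by
        simpa using ((Complex.ofRealCLM.hasDerivAt (x := x)).mul_const
          (Complex.exp (t * Complex.I))).const_add c
      have := (hasFDerivAt_of_contDiffOn hU hv.1 hz).comp_hasDerivAt x hL
      have hre := re_cg_mul (v := v) (c + x * Complex.exp (t * Complex.I))
        (Complex.exp (t * Complex.I))
      rw [hF'def]
      simp only
      rw [hre]
      exact this
  -- h is constant on (0, R₁)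
  have hconst : ∀ s₁ ∈ Ioo (0:ℝ) R₁, ∀ s₂ ∈ Ioo (0:ℝ) R₁, s₁ ≤ s₂ → h s₁ = h s₂ := by
    intro s₁ hs₁ s₂ hs₂ h12
    have : (∫ x in s₁..s₂, (0:ℝ)) = h s₂ - h s₁ := by
      refine intervalIntegral.integral_eq_sub_of_hasDerivAt (fun x hx => ?_)
        (intervalIntegrable_const)
      rw [uIcc_of_le h12] at hx
      exact hderiv x ⟨lt_of_lt_of_le hs₁.1 hx.1, lt_of_le_of_lt hx.2 hs₂.2⟩
    simp at this
    linarith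
  -- limit as s → 0⁺
  have hlim : Filter.Tendsto h (nhdsWithin 0 (Ioi 0)) (nhds (2 * π * v c)) := by
    have h2pi : (∫ (_ : ℝ) in (0:ℝ)..(2*π), v c) = 2 * π * v c := by
      simp [mul_comm]
    rw [← h2pi]
    refine intervalIntegral.tendsto_integral_filter_of_dominated_convergence
      (fun _ => Mv) ?_ ?_ intervalIntegrable_const ?_
    · filter_upwards [Ioo_mem_nhdsGT_of_mem (Set.left_mem_Ico.2 hR₁0)] with x hx
      exact ((hFcont x (by rw [abs_of_pos hx.1]; linarith [hx.2])).aestronglyMeasurable).restrict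
    · filter_upwards [Ioo_mem_nhdsGT_of_mem (Set.left_mem_Ico.2 hR₁0)] with x hx
      filter_upwards with t
      intro _
      have := hMv _ (mem_cball c (ρ := R₁) (s := x) (by rw [abs_of_pos hx.1]; linarith [hx.2]) t)
      simpa using this
    · filter_upwards with t _
      have hc : ContinuousAt v c := hcontv.continuousAt
        (hU.mem_nhds (hsub (mem_closedBall_self hR.le)))
      have hmap : Filter.Tendsto (fun x : ℝ => c + x * Complex.exp (t * Complex.I))
          (nhdsWithin 0 (Ioi 0)) (nhds c) := by
        have hcC : Continuous (fun x : ℝ => c + (x:ℂ) * Complex.exp (t * Complex.I)) :=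
          continuous_const.add
            ((Complex.continuous_ofReal).mul continuous_const)
        have h0 := hcC.continuousAt (x := 0)
        rw [ContinuousAt] at h0
        simpa using h0.mono_left nhdsWithin_le_nhds
      exact hc.tendsto.comp hmap
  -- conclude
  have hev : h =ᶠ[nhdsWithin 0 (Ioi 0)] fun _ => h R := by
    filter_upwards [Ioo_mem_nhdsGT_of_mem (Set.left_mem_Ico.2 (lt_min hR hR₁0))] with x hx
    have hx' : x ∈ Ioo (0:ℝ) R₁ := ⟨hx.1, lt_of_lt_of_le hx.2 (min_le_right _ _)⟩
    have hR' : R ∈ Ioo (0:ℝ) R₁ := ⟨hR, hRR₁⟩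
    rcases le_total x R with hle | hle
    · exact hconst x hx' R hR' hle
    · exact (hconst R hR' x hx' hle).symm
  have hlim2 := hlim.congr' hev
  have h2 : Filter.Tendsto (fun _ : ℝ => h R) (nhdsWithin 0 (Ioi 0)) (nhds (h R)) :=
    tendsto_const_nhds
  have hfin : h R = 2 * π * v c := tendsto_nhds_unique h2 hlim2
  exact hfin


lemma ball_mvp (hU : IsOpen U) (hv : HarmonicOn v U) {c : ℂ} {R : ℝ} (hR : 0 < R)
    (hsub : closedBall c R ⊆ U) :
    ∫ z in closedBall c R, v z = (π * R ^ 2) * v c := by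
  set g : ℂ → ℝ := fun z => v (c + z) with hgdef
  set f : ℂ → ℝ := (closedBall (0:ℂ) R).indicator g with hfdef
  have symm_eq : ∀ p : ℝ × ℝ,
      Complex.polarCoord.symm p = (p.1 : ℂ) * Complex.exp (p.2 * Complex.I) := by
    intro p
    rw [Complex.polarCoord_symm_apply, Complex.exp_mul_I, Complex.ofReal_cos,
      Complex.ofReal_sin]
  -- step 1 : translate
  have hkey : ∀ p : ℂ, f p = (closedBall c R).indicator v (c + p) := by
    intro p
    by_cases hp : p ∈ closedBall (0:ℂ) R
    · have h2 : c + p ∈ closedBall c R := by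
        simp only [mem_closedBall, Complex.dist_eq, add_sub_cancel_left]
        simpa [mem_closedBall, Complex.dist_eq] using hp
      rw [hfdef, Set.indicator_of_mem hp, Set.indicator_of_mem h2, hgdef]
    · have h2 : c + p ∉ closedBall c R := by
        simp only [mem_closedBall, Complex.dist_eq, add_sub_cancel_left] at hp ⊢
        simpa [mem_closedBall, Complex.dist_eq] using hp
      rw [hfdef, Set.indicator_of_notMem hp, Set.indicator_of_notMem h2]
  have step1 : ∫ z in closedBall c R, v z = ∫ p : ℂ, f p := by
    calc ∫ z in closedBall c R, v z
        = ∫ z, (closedBall c R).indicator v z :=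
          (MeasureTheory.integral_indicator measurableSet_closedBall).symm
      _ = ∫ p, (closedBall c R).indicator v (c + p) :=
          (MeasureTheory.integral_add_left_eq_self
            (fun z => (closedBall c R).indicator v z) c).symm
      _ = ∫ p : ℂ, f p := by
          congr 1
          funext p
          rw [hkey p]
  set T' : Set (ℝ × ℝ) := Ioc (0:ℝ) R ×ˢ Ioo (-π) π with hT'def
  set H : ℝ × ℝ → ℝ := fun p => p.1 * v (c + p.1 * Complex.exp (p.2 * Complex.I)) with hHdef
  have hT'sub : T' ⊆ polarCoord.target := by
    rintro ⟨r, θ⟩ ⟨h1, h2⟩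
    exact ⟨h1.1, h2⟩
  have hmeasT' : MeasurableSet T' := measurableSet_Ioc.prod measurableSet_Ioo
  -- step 2 : polar coordinates
  have step2 : ∫ p : ℂ, f p = ∫ p in T', H p := by
    rw [← Complex.integral_comp_polarCoord_symm f]
    have e1 : ∫ p in polarCoord.target, p.1 • f (Complex.polarCoord.symm p)
        = ∫ p in polarCoord.target, T'.indicator (fun p => H p) p := by
      refine setIntegral_congr_fun (polarCoord.open_target.measurableSet) (fun p hp => ?_)
      have hp1 : 0 < p.1 := hp.1
      by_cases hpT : p ∈ T'
      · rw [Set.indicator_of_mem hpT]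
        have hmem : Complex.polarCoord.symm p ∈ closedBall (0:ℂ) R := by
          simp only [mem_closedBall, dist_zero_right,
            Complex.norm_polarCoord_symm, abs_of_pos hp1]
          exact hpT.1.2
        rw [hfdef, Set.indicator_of_mem hmem, hgdef]
        simp only [smul_eq_mul, hHdef, symm_eq p]
      · rw [Set.indicator_of_notMem hpT]
        have hgt : R < p.1 := by
          by_contra hle
          exact hpT ⟨⟨hp1, not_lt.1 hle⟩, hp.2⟩
        have hmem : Complex.polarCoord.symm p ∉ closedBall (0:ℂ) R := by
          simp only [mem_closedBall, dist_zero_right,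
            Complex.norm_polarCoord_symm, abs_of_pos hp1, not_le]
          exact hgt
        rw [hfdef, Set.indicator_of_notMem hmem, smul_zero]
    rw [e1, setIntegral_indicator hmeasT', Set.inter_eq_self_of_subset_right hT'sub]
  -- integrability of H on T'
  have hHint : IntegrableOn H T' := by
    have hK : IsCompact (Icc (0:ℝ) R ×ˢ Icc (-π) π) := isCompact_Icc.prod isCompact_Icc
    have hcontH : ContinuousOn H (Icc (0:ℝ) R ×ˢ Icc (-π) π) := by
      have hmap : ∀ p ∈ Icc (0:ℝ) R ×ˢ Icc (-π) π,
          c + (p.1 : ℂ) * Complex.exp (p.2 * Complex.I) ∈ closedBall c R := by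
        rintro ⟨r, θ⟩ ⟨h1, _⟩
        exact mem_cball c (by rw [_root_.abs_of_nonneg h1.1]; exact h1.2) θ
      have hcont2 : Continuous fun p : ℝ × ℝ =>
          c + (p.1 : ℂ) * Complex.exp (p.2 * Complex.I) := by
        refine continuous_const.add (Continuous.mul ?_ ?_)
        · exact Complex.continuous_ofReal.comp continuous_fst
        · exact Complex.continuous_exp.comp
            ((Complex.continuous_ofReal.comp continuous_snd).mul continuous_const)
      refine ContinuousOn.mul (continuous_fst.continuousOn) ?_
      exact ((hv.1.continuousOn.mono hsub).comp hcont2.continuousOn hmap)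
    exact (hcontH.integrableOn_compact hK).mono_set
      (Set.prod_mono Ioc_subset_Icc_self Ioo_subset_Icc_self)
  -- Fubini and the two integrals
  have step3 : ∫ p in T', H p = ∫ r in Ioc (0:ℝ) R, (2 * π * v c) * r := by
    rw [hT'def, MeasureTheory.Measure.volume_eq_prod,
      MeasureTheory.setIntegral_prod _ (by rwa [← MeasureTheory.Measure.volume_eq_prod, ← hT'def])]
    refine setIntegral_congr_fun measurableSet_Ioc (fun r hr => ?_)
    have hr0 : 0 < r := hr.1
    have hinner : ∫ θ in Ioo (-π) π, H (r, θ)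
        = ∫ θ in (-π)..π, r * v (c + r * Complex.exp (θ * Complex.I)) := by
      rw [intervalIntegral.integral_of_le (by linarith [Real.pi_pos])]
      rw [← MeasureTheory.integral_Ioc_eq_integral_Ioo]
    rw [hinner]
    have hper : Function.Periodic
        (fun θ : ℝ => r * v (c + r * Complex.exp (θ * Complex.I))) (2*π) := by
      intro θ
      have : Complex.exp ((↑(θ + 2*π)) * Complex.I) = Complex.exp (θ * Complex.I) := by
        push_cast
        rw [add_mul, Complex.exp_add]
        simp [Complex.exp_two_pi_mul_I]
      simp only [this]
    have hp2 := hper.intervalIntegral_add_eq (-π) 0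
    rw [show -π + 2*π = π by ring, zero_add] at hp2
    rw [hp2, intervalIntegral.integral_const_mul,
      circle_mvp hU hv hr0 ((closedBall_subset_closedBall hr.2).trans hsub)]
    ring
  have step4 : ∫ r in Ioc (0:ℝ) R, (2 * π * v c) * r = (π * R ^ 2) * v c := by
    rw [← intervalIntegral.integral_of_le hR.le, intervalIntegral.integral_const_mul,
      integral_id]
    ring
  rw [step1, step2, step3, step4]

lemma harnack_step (hU : IsOpen U) (hv : HarmonicOn v U) (hpos : ∀ z ∈ U, 0 ≤ v z)
    {z w : ℂ} {s : ℝ} (hs : 0 < s) (hzw : dist w z ≤ s)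
    (h2 : closedBall z (2*s) ⊆ U) : v w ≤ 4 * v z := by
  have h1 : closedBall w s ⊆ closedBall z (2*s) :=
    closedBall_subset_closedBall' (by linarith)
  have e1 : ∫ x in closedBall w s, v x = π * s ^ 2 * v w :=
    ball_mvp hU hv hs (h1.trans h2)
  have e2 : ∫ x in closedBall z (2*s), v x = π * (2*s) ^ 2 * v z :=
    ball_mvp hU hv (by linarith) h2
  have hmono : ∫ x in closedBall w s, v x ≤ ∫ x in closedBall z (2*s), v x := by
    refine setIntegral_mono_set ?_ ?_ (HasSubset.Subset.eventuallyLE h1)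
    · exact ((hv.1.continuousOn.mono h2).integrableOn_compact (isCompact_closedBall _ _))
    · exact (ae_restrict_iff' measurableSet_closedBall).2
        (Filter.Eventually.of_forall fun x hx => hpos x (h2 hx))
  rw [e1, e2] at hmono
  have hps : (0:ℝ) < π * s ^ 2 := by positivity
  have h4 : π * s ^ 2 * v w ≤ π * s ^ 2 * (4 * v z) := by linear_combination hmono
  exact (mul_le_mul_iff_right₀ hps).1 h4


lemma HarmonicOn.mono {V : Set ℂ} (h : HarmonicOn v U) (hVU : V ⊆ U) : HarmonicOn v V :=
  ⟨h.1.mono hVU, fun z hz => h.2 z (hVU hz)⟩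

lemma harnack_global (hU : IsOpen U) (hconn : IsPreconnected U) {z₀ : ℂ} (hz₀ : z₀ ∈ U)
    {z : ℂ} (hz : z ∈ U) :
    ∃ c > 0, ∀ u : ℂ → ℝ, HarmonicOn u U → (∀ x ∈ U, 0 < u x) → u z ≤ c * u z₀ := by
  set S : Set ℂ := {w | w ∈ U ∧ ∃ c > 0, ∀ u : ℂ → ℝ, HarmonicOn u U →
    (∀ x ∈ U, 0 < u x) → u w ≤ c * u z₀} with hSdef
  have hSopen : IsOpen S := by
    rw [isOpen_iff_mem_nhds]
    rintro w ⟨hw, c, hc, hcw⟩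
    obtain ⟨ε, hε, hball⟩ := Metric.isOpen_iff.1 hU w hw
    have hq : ball w (ε/4) ⊆ S := by
      intro x hx
      refine ⟨hball (by
        have := mem_ball.1 hx
        exact mem_ball.2 (lt_of_lt_of_le this (by linarith))), 4*c, by linarith, ?_⟩
      intro u hu hupos
      have hstep : u x ≤ 4 * u w := by
        refine harnack_step hU hu (fun y hy => (hupos y hy).le) (by linarith)
          (le_of_lt (mem_ball.1 hx)) ?_
        refine subset_trans ?_ hball
        intro y hy
        have h1 := mem_closedBall.1 hy
        exact mem_ball.2 (by linarith)
      calc u x ≤ 4 * u w := hstep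
        _ ≤ 4 * (c * u z₀) := by
            have := hcw u hu hupos
            linarith
        _ = 4 * c * u z₀ := by ring
    exact Filter.mem_of_superset (ball_mem_nhds w (by linarith)) hq
  have hclosure : closure S ∩ U ⊆ S := by
    rintro w ⟨hwc, hw⟩
    obtain ⟨ε, hε, hball⟩ := Metric.isOpen_iff.1 hU w hw
    obtain ⟨x, hxS, hxd⟩ := Metric.mem_closure_iff.1 hwc (ε/8) (by linarith)
    obtain ⟨hxU, c, hc, hcx⟩ := hxS
    refine ⟨hw, 4*c, by linarith, ?_⟩
    intro u hu hupos
    have hstep : u w ≤ 4 * u x := by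
      refine harnack_step hU hu (fun y hy => (hupos y hy).le) (show (0:ℝ) < ε/8 by linarith)
        hxd.le ?_
      refine subset_trans ?_ hball
      intro y hy
      have h1 := mem_closedBall.1 hy
      have h2 : dist y w ≤ dist y x + dist x w := dist_triangle y x w
      rw [dist_comm x w] at h2
      exact mem_ball.2 (by linarith)
    calc u w ≤ 4 * u x := hstep
      _ ≤ 4 * (c * u z₀) := by
          have := hcx u hu hupos
          linarith
      _ = 4 * c * u z₀ := by ring
  have hne : (U ∩ S).Nonempty := by
    refine ⟨z₀, hz₀, hz₀, 1, one_pos, fun u _ _ => by linarith⟩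
  have hsub : U ⊆ S := hconn.subset_of_closure_inter_subset hSopen hne hclosure
  exact (hsub hz).2

lemma harnack_compact (hU : IsOpen U) (hconn : IsPreconnected U) {z₀ : ℂ} (hz₀ : z₀ ∈ U)
    {K : Set ℂ} (hK : IsCompact K) (hKU : K ⊆ U) :
    ∃ c > 0, ∀ z ∈ K, ∀ u : ℂ → ℝ, HarmonicOn u U →
      (∀ x ∈ U, 0 < u x) → u z ≤ c * u z₀ := by
  have h : ∀ z : ℂ, ∃ r > 0, ∃ c > 0, z ∈ K → ∀ w ∈ ball z r, ∀ u : ℂ → ℝ,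
      HarmonicOn u U → (∀ x ∈ U, 0 < u x) → u w ≤ c * u z₀ := by
    intro z
    by_cases hzK : z ∈ K
    · obtain ⟨c, hc, hcz⟩ := harnack_global hU hconn hz₀ (hKU hzK)
      obtain ⟨ε, hε, hball⟩ := Metric.isOpen_iff.1 hU z (hKU hzK)
      refine ⟨ε/4, by linarith, 4*c, by linarith, fun _ w hw u hu hupos => ?_⟩
      have hstep : u w ≤ 4 * u z := by
        refine harnack_step hU hu (fun y hy => (hupos y hy).le) (by linarith)
          (le_of_lt (mem_ball.1 hw)) ?_
        refine subset_trans ?_ hball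
        intro y hy
        have h1 := mem_closedBall.1 hy
        exact mem_ball.2 (by linarith)
      calc u w ≤ 4 * u z := hstep
        _ ≤ 4 * (c * u z₀) := by
            have := hcz u hu hupos
            linarith
        _ = 4 * c * u z₀ := by ring
    · exact ⟨1, one_pos, 1, one_pos, fun h' => absurd h' hzK⟩
  choose r hr c hc H using h
  obtain ⟨t, htK, htcov⟩ := hK.elim_nhds_subcover (fun z => ball z (r z))
    (fun z _ => ball_mem_nhds z (hr z))
  set C : ℝ := 1 + ∑ z ∈ t, |c z| with hCdef
  have hCpos : 0 < C := by
    have : (0:ℝ) ≤ ∑ z ∈ t, |c z| := Finset.sum_nonneg (fun z _ => abs_nonneg _)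
    linarith
  refine ⟨C, hCpos, fun z hzK u hu hupos => ?_⟩
  obtain ⟨x, hxt, hzx⟩ := Set.mem_iUnion₂.1 (htcov hzK)
  have h1 : u z ≤ c x * u z₀ := H x (htK x hxt) z hzx u hu hupos
  have h2 : c x ≤ C := by
    have h3 : |c x| ≤ ∑ z ∈ t, |c z| :=
      Finset.single_le_sum (fun z _ => abs_nonneg (c z)) hxt
    calc c x ≤ |c x| := le_abs_self _
      _ ≤ ∑ z ∈ t, |c z| := h3
      _ ≤ C := by linarith
  have hz₀pos : 0 < u z₀ := hupos z₀ hz₀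
  calc u z ≤ c x * u z₀ := h1
    _ ≤ C * u z₀ := by
        exact mul_le_mul_of_nonneg_right h2 hz₀pos.le


lemma harmonic_smul (hU : IsOpen U) (hv : HarmonicOn v U) {l : ℝ} (hl : l ≠ 0) :
    HarmonicOn (fun z => v ((l:ℂ) * z)) {z : ℂ | (l:ℂ) * z ∈ U} := by
  have hmul : Continuous fun z : ℂ => (l:ℂ) * z := continuous_const.mul continuous_id
  have hU' : IsOpen {z : ℂ | (l:ℂ) * z ∈ U} := hU.preimage hmul
  constructor
  · refine hv.1.comp ((contDiff_const.mul contDiff_id).contDiffOn) (fun z hz => hz)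
  · intro z hz
    have hlz : (l:ℂ) * z ∈ U := hz
    set D2 := fderiv ℝ (fderiv ℝ v) ((l:ℂ) * z) with hD2def
    have e1 : deriv (deriv (fun x : ℝ => v ((l:ℂ) * ((x:ℂ) + z.im * Complex.I)))) z.re
        = D2 (l:ℂ) (l:ℂ) := by
      refine deriv_deriv_line hU hv.1 hlz
        (fun t : ℝ => (l:ℂ) * ((t:ℂ) + z.im * Complex.I)) (l:ℂ) z.re (fun t => ?_) ?_
      · have h0 : HasDerivAt (fun t : ℝ => (t:ℂ) + z.im * Complex.I) 1 t := by
          simpa using (Complex.ofRealCLM.hasDerivAt (x := t)).add_const ((z.im:ℂ) * Complex.I)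
        simpa using h0.const_mul (l:ℂ)
      · show (l:ℂ) * ((z.re:ℂ) + z.im * Complex.I) = (l:ℂ) * z
        rw [Complex.re_add_im]
    have e2 : deriv (deriv (fun y : ℝ => v ((l:ℂ) * ((z.re:ℂ) + y * Complex.I)))) z.im
        = D2 ((l:ℂ) * Complex.I) ((l:ℂ) * Complex.I) := by
      refine deriv_deriv_line hU hv.1 hlz
        (fun t : ℝ => (l:ℂ) * ((z.re:ℂ) + t * Complex.I)) ((l:ℂ) * Complex.I) z.im
        (fun t => ?_) ?_
      · have h0 : HasDerivAt (fun t : ℝ => (z.re:ℂ) + t * Complex.I) Complex.I t := by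
          simpa using ((Complex.ofRealCLM.hasDerivAt (x := t)).mul_const
            Complex.I).const_add (z.re:ℂ)
        simpa [mul_comm] using h0.const_mul (l:ℂ)
      · show (l:ℂ) * ((z.re:ℂ) + z.im * Complex.I) = (l:ℂ) * z
        rw [Complex.re_add_im]
    have hsm1 : ((l:ℂ)) = l • (1:ℂ) := by simp [Complex.real_smul]
    have hsmI : ((l:ℂ) * Complex.I) = l • Complex.I := by simp [Complex.real_smul]
    have hlap := hv.2 ((l:ℂ) * z) hlz
    rw [lap_eq hU hv.1 hlz] at hlap
    unfold lap
    simp only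
    rw [e1, e2, hsmI, hsm1]
    simp only [_root_.map_smul, ContinuousLinearMap.smul_apply, smul_eq_mul]
    linear_combination (l * l : ℝ) * hlap


lemma memA_iff {α : ℝ} (hαπ : α ≤ π) {z : ℂ} :
    (∃ r θ : ℝ, r > 0 ∧ |θ| < α ∧ z = (r:ℂ) * Complex.exp (θ * Complex.I))
      ↔ z ≠ 0 ∧ |Complex.arg z| < α := by
  constructor
  · rintro ⟨r, θ, hr, hθ, rfl⟩
    have habs := abs_lt.1 hθ
    constructor
    · exact mul_ne_zero (by exact_mod_cast hr.ne') (Complex.exp_ne_zero _)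
    · have h1 : Complex.arg ((r:ℂ) * Complex.exp (θ * Complex.I))
          = Complex.arg (Complex.exp (θ * Complex.I)) := Complex.arg_real_mul _ hr
      have h2 : Complex.arg (Complex.exp ((θ:ℝ) * Complex.I)) = θ := by
        rw [Complex.exp_mul_I]
        have hIoc : θ ∈ Set.Ioc (-π) π := ⟨by linarith [habs.1], by linarith [habs.2]⟩
        exact Complex.arg_cos_add_sin_mul_I hIoc
      rw [h1, h2]
      exact hθ
  · rintro ⟨h0, hθ⟩
    exact ⟨‖z‖, Complex.arg z, norm_pos_iff.mpr h0, hθ,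
      (Complex.norm_mul_exp_arg_mul_I z).symm⟩

lemma isOpen_sector {α : ℝ} (hαπ : α ≤ π) :
    IsOpen {z : ℂ | z ≠ 0 ∧ |Complex.arg z| < α} := by
  rw [isOpen_iff_mem_nhds]
  rintro z ⟨h0, hθ⟩
  have hslit : z ∈ Complex.slitPlane := by
    rw [Complex.mem_slitPlane_iff_arg]
    refine ⟨fun hpi => ?_, h0⟩
    rw [hpi] at hθ
    rw [abs_of_pos Real.pi_pos] at hθ
    linarith
  have hc := Complex.continuousAt_arg hslit
  have h1 : Complex.arg ⁻¹' (Ioo (-α) α) ∈ nhds z := by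
    refine hc.preimage_mem_nhds (Ioo_mem_nhds ?_ ?_)
    · exact neg_lt_of_abs_lt hθ
    · exact lt_of_abs_lt hθ
  have h2 : {w : ℂ | w ≠ 0} ∈ nhds z := by
    exact IsOpen.mem_nhds isOpen_ne h0
  filter_upwards [h1, h2] with w hw1 hw2
  exact ⟨hw2, abs_lt.2 ⟨hw1.1, hw1.2⟩⟩

lemma smul_mem_sector {α l : ℝ} (hl : 0 < l) {z : ℂ}
    (hz : z ≠ 0 ∧ |Complex.arg z| < α) :
    ((l:ℂ) * z ≠ 0 ∧ |Complex.arg ((l:ℂ) * z)| < α) :=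
  ⟨mul_ne_zero (by exact_mod_cast hl.ne') hz.1, by
    rw [Complex.arg_real_mul _ hl]; exact hz.2⟩

end PHPG

open PHPG in
theorem positive_harmonic_polynomial_growth_in_subsector
    (α β : ℝ) (hα₀ : 0 < α) (hαπ : α ≤ π) (hβ₀ : 0 < β) (hβα : β < α)
    (A : Set ℂ)
    (hA : A = {z : ℂ | ∃ r θ : ℝ, r > 0 ∧ |θ| < α ∧ z = (r : ℂ) * Complex.exp (θ * Complex.I)})
    (v : ℂ → ℝ) (hharm : HarmonicOn v A) (hpos : ∀ z ∈ A, 0 < v z) :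
    ∃ C > 0, ∃ p > 0, ∀ r θ : ℝ, 1 ≤ r → |θ| ≤ β →
      v ((r : ℂ) * Complex.exp (θ * Complex.I)) ≤ C * r ^ p := by
  have hAeq : A = {z : ℂ | z ≠ 0 ∧ |Complex.arg z| < α} := by
    rw [hA]; ext z; exact memA_iff hαπ
  have hAopen : IsOpen A := hAeq ▸ isOpen_sector hαπ
  have hApre : IsPreconnected A := by
    have himg : A = (fun p : ℝ × ℝ => (p.1:ℂ) * Complex.exp (p.2 * Complex.I)) ''
        (Ioi (0:ℝ) ×ˢ Ioo (-α) α) := by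
      rw [hA]; ext z
      constructor
      · rintro ⟨r, θ, hr, hθ, rfl⟩
        exact ⟨(r, θ), ⟨hr, abs_lt.1 hθ⟩, rfl⟩
      · rintro ⟨⟨r, θ⟩, ⟨hr, hθ⟩, rfl⟩
        exact ⟨r, θ, hr, abs_lt.2 ⟨hθ.1, hθ.2⟩, rfl⟩
    rw [himg]
    refine IsPreconnected.image ?_ _ ?_
    · exact ((convex_Ioi (0:ℝ)).prod (convex_Ioo (-α) α)).isPreconnected
    · refine Continuous.continuousOn ?_
      refine Continuous.mul (Complex.continuous_ofReal.comp continuous_fst) ?_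
      exact Complex.continuous_exp.comp
        ((Complex.continuous_ofReal.comp continuous_snd).mul continuous_const)
  have h1A : (1:ℂ) ∈ A := by
    rw [hAeq]
    refine ⟨one_ne_zero, ?_⟩
    rw [Complex.arg_one]
    simpa using hα₀
  have hsmulA : ∀ l : ℝ, 0 < l → ∀ z ∈ A, (l:ℂ) * z ∈ A := by
    intro l hl z hz
    rw [hAeq] at hz ⊢
    exact smul_mem_sector hl hz
  set K : Set ℂ := (fun p : ℝ × ℝ => (p.1:ℂ) * Complex.exp (p.2 * Complex.I)) ''
    (Icc (1:ℝ) 2 ×ˢ Icc (-β) β) with hKdef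
  have hKcomp : IsCompact K := by
    refine (isCompact_Icc.prod isCompact_Icc).image ?_
    refine Continuous.mul (Complex.continuous_ofReal.comp continuous_fst) ?_
    exact Complex.continuous_exp.comp
      ((Complex.continuous_ofReal.comp continuous_snd).mul continuous_const)
  have hKA : K ⊆ A := by
    rintro z ⟨⟨r, θ⟩, ⟨hr, hθ⟩, rfl⟩
    rw [hA]
    exact ⟨r, θ, by linarith [hr.1], lt_of_le_of_lt (abs_le.2 ⟨hθ.1, hθ.2⟩) hβα, rfl⟩
  obtain ⟨c, hc0, hharn⟩ := harnack_compact hAopen hApre h1A hKcomp hKA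
  set c' := max c 2 with hc'def
  have hc'2 : (2:ℝ) ≤ c' := le_max_right _ _
  have hcc' : c ≤ c' := le_max_left _ _
  have hc'1 : (1:ℝ) ≤ c' := by linarith
  have hc'0 : (0:ℝ) < c' := by linarith
  have hv1 : 0 < v 1 := hpos 1 h1A
  have main : ∀ n : ℕ, ∀ r θ : ℝ, 1 ≤ r → r ≤ 2^n → |θ| ≤ β →
      v ((r:ℂ) * Complex.exp (θ * Complex.I)) ≤ c'^(n+1) * v 1 := by
    intro n
    induction n with
    | zero =>
      intro r θ h1 h2 hθ
      have hzK : (r:ℂ) * Complex.exp (θ * Complex.I) ∈ K := by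
        refine ⟨(r, θ), ⟨⟨h1, ?_⟩, abs_le.1 hθ⟩, rfl⟩
        simp only [pow_zero] at h2
        linarith
      calc v ((r:ℂ) * Complex.exp (θ * Complex.I)) ≤ c * v 1 := hharn _ hzK v hharm hpos
        _ ≤ c'^(0+1) * v 1 := by
            rw [pow_one]
            exact mul_le_mul_of_nonneg_right hcc' hv1.le
    | succ n ih =>
      intro r θ h1 h2 hθ
      by_cases hr2 : r ≤ 2
      · have hzK : (r:ℂ) * Complex.exp (θ * Complex.I) ∈ K :=
          ⟨(r, θ), ⟨⟨h1, hr2⟩, abs_le.1 hθ⟩, rfl⟩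
        calc v ((r:ℂ) * Complex.exp (θ * Complex.I)) ≤ c * v 1 := hharn _ hzK v hharm hpos
          _ ≤ c'^(n+1+1) * v 1 := by
              refine mul_le_mul_of_nonneg_right ?_ hv1.le
              calc c ≤ c' := hcc'
                _ ≤ c'^(n+2) := le_self_pow₀ hc'1 (by omega)
      · push_neg at hr2
        set l := r/2 with hldef
        have hl1 : 1 ≤ l := by rw [hldef]; linarith
        have hl0 : 0 < l := by linarith
        have hl2n : l ≤ 2^n := by
          rw [hldef]
          rw [pow_succ] at h2
          linarith
        set u := fun z : ℂ => v ((l:ℂ) * z) with hudef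
        have hu : HarmonicOn u A := by
          refine HarmonicOn.mono (harmonic_smul hAopen hharm hl0.ne') ?_
          intro z hz
          exact hsmulA l hl0 z hz
        have hupos : ∀ x ∈ A, 0 < u x := fun x hx => hpos _ (hsmulA l hl0 x hx)
        have h2K : ((2:ℝ):ℂ) * Complex.exp (θ * Complex.I) ∈ K :=
          ⟨(2, θ), ⟨⟨one_le_two, le_refl 2⟩, abs_le.1 hθ⟩, rfl⟩
        have hb := hharn _ h2K u hu hupos
        have he1 : u (((2:ℝ):ℂ) * Complex.exp (θ * Complex.I))
            = v ((r:ℂ) * Complex.exp (θ * Complex.I)) := by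
          simp only [hudef]
          have harith : ((l:ℂ)) * (((2:ℝ):ℂ) * Complex.exp (θ * Complex.I))
              = (r:ℂ) * Complex.exp (θ * Complex.I) := by
            rw [hldef]
            push_cast
            ring
          rw [harith]
        have he2 : u 1 = v ((l:ℂ) * Complex.exp (((0:ℝ):ℂ) * Complex.I)) := by
          simp [hudef]
        have hih := ih l 0 hl1 hl2n (by simpa using hβ₀.le)
        calc v ((r:ℂ) * Complex.exp (θ * Complex.I))
            = u (((2:ℝ):ℂ) * Complex.exp (θ * Complex.I)) := he1.symm
          _ ≤ c * u 1 := hb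
          _ = c * v ((l:ℂ) * Complex.exp (((0:ℝ):ℂ) * Complex.I)) := by rw [he2]
          _ ≤ c' * (c'^(n+1) * v 1) := by
              have hmem0 : ((l:ℂ)) * Complex.exp (((0:ℝ):ℂ) * Complex.I) ∈ A := by
                rw [hA]
                exact ⟨l, 0, hl0, by simpa using hα₀, rfl⟩
              exact mul_le_mul hcc' hih (hpos _ hmem0).le hc'0.le
          _ = c'^(n+1+1) * v 1 := by ring
  have hlogc' : 0 < Real.logb 2 c' := Real.logb_pos one_lt_two (by linarith)
  set m : ℕ := Nat.ceil (Real.logb 2 c') with hmdef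
  have hm0 : 0 < m := Nat.ceil_pos.mpr hlogc'
  refine ⟨c'^2 * v 1, by positivity, m, hm0, ?_⟩
  intro r θ hr hθ
  have hr0 : (0:ℝ) < r := by linarith
  set n := Nat.ceil (Real.logb 2 r) with hndef
  have hlogb_nonneg : 0 ≤ Real.logb 2 r := Real.logb_nonneg one_lt_two hr
  have hrn : r ≤ 2^n := by
    have hle : Real.logb 2 r ≤ (n:ℝ) := Nat.le_ceil _
    have := (Real.logb_le_iff_le_rpow one_lt_two hr0).1 hle
    rwa [Real.rpow_natCast] at this
  have hb := main n r θ hr hrn hθ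
  have hn : (n:ℝ) ≤ Real.logb 2 r + 1 := by
    have := Nat.ceil_lt_add_one hlogb_nonneg
    linarith
  have hpow : (c':ℝ)^(n+1) ≤ c' ^ ((2:ℝ) + Real.logb 2 r) := by
    rw [← Real.rpow_natCast c' (n+1)]
    refine Real.rpow_le_rpow_of_exponent_le hc'1 ?_
    push_cast
    linarith
  have hswap : c' ^ (Real.logb 2 r) = r ^ (Real.logb 2 c') := by
    rw [Real.rpow_def_of_pos hc'0, Real.rpow_def_of_pos hr0, Real.logb, Real.logb]
    ring_nf
  have hrm : r ^ (Real.logb 2 c') ≤ r ^ (m:ℕ) := by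
    rw [← Real.rpow_natCast r m]
    exact Real.rpow_le_rpow_of_exponent_le hr (Nat.le_ceil _)
  calc v ((r:ℂ) * Complex.exp (θ * Complex.I)) ≤ c'^(n+1) * v 1 := hb
    _ ≤ c' ^ ((2:ℝ) + Real.logb 2 r) * v 1 := mul_le_mul_of_nonneg_right hpow hv1.le
    _ = (c'^2 * v 1) * r ^ (Real.logb 2 c') := by
        rw [Real.rpow_add hc'0, hswap,
          show ((2:ℝ)) = ((2:ℕ):ℝ) by norm_num, Real.rpow_natCast]
        ring
    _ ≤ (c'^2 * v 1) * r ^ (m:ℕ) := by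
        refine mul_le_mul_of_nonneg_left hrm ?_
        positivity
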